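/- arXiv:1211.3219 — 5 statements merged into one kernel-verified Lean document; each statement's English description precedes it below -/
import Mathlib

section
/- If κ = 1 or κ = −1, then the function C2 = (γ, B M), where B = tr(A^{-1}) E + (κ − 1) A^{-1}, is a first integral of the equations dM/dt = M × ω, dγ/dt = κ γ × ω. -/
open scoped BigOperators
noncomputable section

/-- ℝ³ as functions `Fin 3 → ℝ`. -/
abbrev R3 := Fin 3 → ℝ

/-- Phase space: pairs `(γ, M)`. -/
abbrev St := R3 × R3

/-- Standard scalar product in ℝ³. -/
def dot3 (x y : R3) : ℝ := ∑ i, x i * y i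

/-- Cross product in ℝ³. -/
def cross (x y : R3) : R3 :=
  ![x 1 * y 2 - x 2 * y 1, x 2 * y 0 - x 0 * y 2, x 0 * y 1 - x 1 * y 0]

/-- Levi-Civita symbol. -/
def eps (i j k : Fin 3) : ℝ :=
  ((((j : ℤ) - (i : ℤ)) * ((k : ℤ) - (i : ℤ)) * ((k : ℤ) - (j : ℤ))) / 2 : ℤ)

/-- Application of the diagonal matrix A = diag a. -/
def Aapp (a : R3) (v : R3) : R3 := fun i => a i * v i

/-- Angular velocity ω expressed through M. -/
def omg (a : R3) (d : ℝ) (x : St) : R3 := fun i =>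
  a i * x.2 i + d * dot3 x.1 (Aapp a x.2) / (1 - d * dot3 x.1 (Aapp a x.1)) * (a i * x.1 i)

/-- g(γ) = sqrt(1 - d (γ, Aγ)). -/
def gfun (a : R3) (d : ℝ) (γ : R3) : ℝ := Real.sqrt (1 - d * dot3 γ (Aapp a γ))

/-- Partial derivative in the γ (inl) or M (inr) direction. -/
def pd : (Fin 3 ⊕ Fin 3) → (St → ℝ) → St → ℝ
  | .inl i, F, x => fderiv ℝ F x (Pi.single i 1, 0)
  | .inr i, F, x => fderiv ℝ F x (0, Pi.single i 1)

/-- Bracket of two functions determined by a structure matrix π. -/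
def pb (π : St → (Fin 3 ⊕ Fin 3) → (Fin 3 ⊕ Fin 3) → ℝ) (F G : St → ℝ) (x : St) : ℝ :=
  ∑ u, ∑ v, π x u v * pd u F x * pd v G x

/-- Structure matrix of the bracket {·,·}_g. -/
def piG (a : R3) (d : ℝ) (x : St) : (Fin 3 ⊕ Fin 3) → (Fin 3 ⊕ Fin 3) → ℝ
  | .inl _, .inl _ => 0
  | .inl i, .inr j => ∑ k, eps i j k * gfun a d x.1 * x.1 k
  | .inr i, .inl j => ∑ k, eps i j k * gfun a d x.1 * x.1 k
  | .inr i, .inr j => ∑ k, eps i j k *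
      (gfun a d x.1 * x.2 k - d * dot3 x.2 (Aapp a x.1) * x.1 k / gfun a d x.1)

/-- Coordinate functions on the phase space. -/
def coordFn : (Fin 3 ⊕ Fin 3) → St → ℝ
  | .inl i => fun x => x.1 i
  | .inr i => fun x => x.2 i

set_option maxHeartbeats 2000000 in
/-- for κ = ±1, C2 = (γ, B M) with B = tr(A⁻¹)E + (κ-1)A⁻¹ is a first
integral of dM/dt = M × ω, dγ/dt = κ γ × ω. -/
theorem first_integral_C2
    (a : R3) (d κ : ℝ) (hd : 0 < d) (ha : ∀ i, a i ≠ 0)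
    (hκ : κ = 1 ∨ κ = -1)
    (B : Fin 3 → ℝ) (hB : ∀ i, B i = (∑ m, (a m)⁻¹) + (κ - 1) * (a i)⁻¹)
    (γ M : ℝ → R3)
    (hdom : ∀ t, 1 - d * dot3 (γ t) (Aapp a (γ t)) ≠ 0)
    (hM : ∀ t i, HasDerivAt (fun s => M s i) (cross (M t) (omg a d (γ t, M t)) i) t)
    (hγ : ∀ t i, HasDerivAt (fun s => γ s i) (κ * cross (γ t) (omg a d (γ t, M t)) i) t) :
    ∀ t s : ℝ,
      dot3 (γ t) (fun i => B i * M t i) = dot3 (γ s) (fun i => B i * M s i) := by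

  have key : ∀ t, HasDerivAt (fun s => dot3 (γ s) (fun i => B i * M s i)) 0 t := by
    intro t
    have h0 : HasDerivAt (fun s => γ s 0 * (B 0 * M s 0))
        (κ * cross (γ t) (omg a d (γ t, M t)) 0 * (B 0 * M t 0)
          + γ t 0 * (B 0 * cross (M t) (omg a d (γ t, M t)) 0)) t :=
      (hγ t 0).mul ((hM t 0).const_mul (B 0))
    have h1 : HasDerivAt (fun s => γ s 1 * (B 1 * M s 1))
        (κ * cross (γ t) (omg a d (γ t, M t)) 1 * (B 1 * M t 1)
          + γ t 1 * (B 1 * cross (M t) (omg a d (γ t, M t)) 1)) t :=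
      (hγ t 1).mul ((hM t 1).const_mul (B 1))
    have h2 : HasDerivAt (fun s => γ s 2 * (B 2 * M s 2))
        (κ * cross (γ t) (omg a d (γ t, M t)) 2 * (B 2 * M t 2)
          + γ t 2 * (B 2 * cross (M t) (omg a d (γ t, M t)) 2)) t :=
      (hγ t 2).mul ((hM t 2).const_mul (B 2))
    have hsum := (h0.add h1).add h2
    have heq : (fun s => γ s 0 * (B 0 * M s 0) + γ s 1 * (B 1 * M s 1) + γ s 2 * (B 2 * M s 2))
        = fun s => dot3 (γ s) (fun i => B i * M s i) := by
      funext s; simp [dot3, Fin.sum_univ_three]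
    simp only [Pi.add_def] at hsum
    rw [heq] at hsum
    refine hsum.congr_deriv ?_
    set c := d * dot3 (γ t) (Aapp a (M t)) / (1 - d * dot3 (γ t) (Aapp a (γ t))) with hc
    have hw : ∀ i, omg a d (γ t, M t) i = a i * M t i + c * (a i * γ t i) := fun i => rfl
    clear_value c
    have hB0 : B 0 = (a 1 * a 2 + a 0 * a 2 + a 0 * a 1 + (κ - 1) * (a 1 * a 2)) /
        (a 0 * a 1 * a 2) := by
      rw [hB, Fin.sum_univ_three]; field_simp [ha 0, ha 1, ha 2]
    have hB1 : B 1 = (a 1 * a 2 + a 0 * a 2 + a 0 * a 1 + (κ - 1) * (a 0 * a 2)) /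
        (a 0 * a 1 * a 2) := by
      rw [hB, Fin.sum_univ_three]; field_simp [ha 0, ha 1, ha 2]
    have hB2 : B 2 = (a 1 * a 2 + a 0 * a 2 + a 0 * a 1 + (κ - 1) * (a 0 * a 1)) /
        (a 0 * a 1 * a 2) := by
      rw [hB, Fin.sum_univ_three]; field_simp [ha 0, ha 1, ha 2]
    rcases hκ with h | h <;> subst h <;>
      simp only [hB0, hB1, hB2, cross, hw, Fin.sum_univ_three, Matrix.cons_val_zero,
        Matrix.cons_val_one, Matrix.head_cons, Matrix.cons_val_two, Matrix.tail_cons] <;>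
      field_simp [ha 0, ha 1, ha 2] <;> ring
  intro t s
  exact is_const_of_deriv_eq_zero (fun x => (key x).differentiableAt)
    (fun x => (key x).deriv) t s
end
end

section
/- The density g(γ)^{-1} with g(γ) = sqrt(1 − d (γ, A γ)) defines an invariant measure for the vector field of the reduced equations dM/dt = M × ω, dγ/dt = κ γ × ω; that is, the divergence of g^{-1} times the vector field vanishes. -/
open scoped BigOperators
noncomputable section

set_option maxHeartbeats 3200000 in
/-- the density g(γ)⁻¹ with g = sqrt(1 - d(γ,Aγ)) defines an invariant
measure: the divergence of g⁻¹ times the reduced vector field vanishes. -/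
theorem invariant_measure
    (a : R3) (d κ : ℝ) (hd : 0 < d) (ha : ∀ i, 0 < a i)
    (x : St) (hx : 0 < 1 - d * dot3 x.1 (Aapp a x.1)) :
    (∑ i, pd (.inl i)
        (fun y => (gfun a d y.1)⁻¹ * (κ * cross y.1 (omg a d y) i)) x) +
    (∑ i, pd (.inr i)
        (fun y => (gfun a d y.1)⁻¹ * (cross y.2 (omg a d y) i)) x) = 0 := by
  have hQx : (0:ℝ) < 1 - d * (x.1 0 * (a 0 * x.1 0) + x.1 1 * (a 1 * x.1 1)
      + x.1 2 * (a 2 * x.1 2)) := by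
    simpa [dot3, Aapp, Fin.sum_univ_three] using hx
  have hg : ∀ j : Fin 3, HasFDerivAt (fun y : St => y.1 j)
      ((ContinuousLinearMap.proj j).comp (ContinuousLinearMap.fst ℝ R3 R3)) x :=
    fun j => ((ContinuousLinearMap.proj j).comp (ContinuousLinearMap.fst ℝ R3 R3)).hasFDerivAt
  have hm : ∀ j : Fin 3, HasFDerivAt (fun y : St => y.2 j)
      ((ContinuousLinearMap.proj j).comp (ContinuousLinearMap.snd ℝ R3 R3)) x :=
    fun j => ((ContinuousLinearMap.proj j).comp (ContinuousLinearMap.snd ℝ R3 R3)).hasFDerivAt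
  have hQ := (hasFDerivAt_const (1:ℝ) x).sub
    (((((hg 0).mul ((hg 0).const_mul (a 0))).add ((hg 1).mul ((hg 1).const_mul (a 1)))).add
      ((hg 2).mul ((hg 2).const_mul (a 2)))).const_mul d)
  have hsq := hQ.sqrt (ne_of_gt hQx)
  have hgi := (hasDerivAt_inv (ne_of_gt (Real.sqrt_pos.mpr hQx))).comp_hasFDerivAt x hsq
  have hQi := (hasDerivAt_inv (ne_of_gt hQx)).comp_hasFDerivAt x hQ
  have hP := (((hg 0).mul ((hm 0).const_mul (a 0))).add ((hg 1).mul ((hm 1).const_mul (a 1)))).add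
    ((hg 2).mul ((hm 2).const_mul (a 2)))
  have hw0 := ((hm 0).const_mul (a 0)).add (((hP.const_mul d).mul hQi).mul ((hg 0).const_mul (a 0)))
  have hw1 := ((hm 1).const_mul (a 1)).add (((hP.const_mul d).mul hQi).mul ((hg 1).const_mul (a 1)))
  have hw2 := ((hm 2).const_mul (a 2)).add (((hP.const_mul d).mul hQi).mul ((hg 2).const_mul (a 2)))
  -- equality of the goal integrand with the combinator form
  have heq : ∀ (F G : St → ℝ), (∀ y, F y = G y) → F =ᶠ[nhds x] G :=
    fun F G h => Filter.Eventually.of_forall h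

  have hF0 := HasFDerivAt.congr_of_eventuallyEq
    (hgi.mul ((((hg 1).mul hw2).sub ((hg 2).mul hw1)).const_mul κ))
    (heq (fun y => (gfun a d y.1)⁻¹ * (κ * cross y.1 (omg a d y) 0)) _ (fun y => by
        simp [gfun, omg, cross, dot3, Aapp, Fin.sum_univ_three, Function.comp, div_eq_mul_inv]
        try ring))
  have hF1 := HasFDerivAt.congr_of_eventuallyEq
    (hgi.mul ((((hg 2).mul hw0).sub ((hg 0).mul hw2)).const_mul κ))
    (heq (fun y => (gfun a d y.1)⁻¹ * (κ * cross y.1 (omg a d y) 1)) _ (fun y => by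
        simp [gfun, omg, cross, dot3, Aapp, Fin.sum_univ_three, Function.comp, div_eq_mul_inv]
        try ring))
  have hF2 := HasFDerivAt.congr_of_eventuallyEq
    (hgi.mul ((((hg 0).mul hw1).sub ((hg 1).mul hw0)).const_mul κ))
    (heq (fun y => (gfun a d y.1)⁻¹ * (κ * cross y.1 (omg a d y) 2)) _ (fun y => by
        simp [gfun, omg, cross, dot3, Aapp, Fin.sum_univ_three, Function.comp, div_eq_mul_inv]
        try ring))
  have hG0 := HasFDerivAt.congr_of_eventuallyEq
    (hgi.mul (((hm 1).mul hw2).sub ((hm 2).mul hw1)))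
    (heq (fun y => (gfun a d y.1)⁻¹ * (cross y.2 (omg a d y) 0)) _ (fun y => by
        simp [gfun, omg, cross, dot3, Aapp, Fin.sum_univ_three, Function.comp, div_eq_mul_inv]
        try ring))
  have hG1 := HasFDerivAt.congr_of_eventuallyEq
    (hgi.mul (((hm 2).mul hw0).sub ((hm 0).mul hw2)))
    (heq (fun y => (gfun a d y.1)⁻¹ * (cross y.2 (omg a d y) 1)) _ (fun y => by
        simp [gfun, omg, cross, dot3, Aapp, Fin.sum_univ_three, Function.comp, div_eq_mul_inv]
        try ring))
  have hG2 := HasFDerivAt.congr_of_eventuallyEq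
    (hgi.mul (((hm 0).mul hw1).sub ((hm 1).mul hw0)))
    (heq (fun y => (gfun a d y.1)⁻¹ * (cross y.2 (omg a d y) 2)) _ (fun y => by
        simp [gfun, omg, cross, dot3, Aapp, Fin.sum_univ_three, Function.comp, div_eq_mul_inv]
        try ring))
  have redl : ∀ (F : St → ℝ) (L : St →L[ℝ] ℝ) (i : Fin 3), HasFDerivAt F L x →
      pd (.inl i) F x = L (Pi.single i 1, 0) := fun F L i h => by simp only [pd, h.fderiv]
  have redr : ∀ (F : St → ℝ) (L : St →L[ℝ] ℝ) (i : Fin 3), HasFDerivAt F L x →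
      pd (.inr i) F x = L (0, Pi.single i 1) := fun F L i h => by simp only [pd, h.fderiv]
  rw [Fin.sum_univ_three, Fin.sum_univ_three,
    redl _ _ _ hF0, redl _ _ _ hF1, redl _ _ _ hF2,
    redr _ _ _ hG0, redr _ _ _ hG1, redr _ _ _ hG2]
  simp only [ContinuousLinearMap.add_apply, ContinuousLinearMap.sub_apply,
    ContinuousLinearMap.smul_apply, ContinuousLinearMap.coe_comp', Function.comp_apply,
    ContinuousLinearMap.coe_fst', ContinuousLinearMap.coe_snd', ContinuousLinearMap.proj_apply,
    ContinuousLinearMap.zero_apply, smul_eq_mul, Pi.single_apply, Pi.zero_apply, reduceIte, Fin.reduceEq, ContinuousLinearMap.neg_apply,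
    mul_zero, zero_mul, add_zero, zero_add, mul_one, one_mul, sub_zero, zero_sub,
    Pi.mul_apply, Pi.add_apply, Pi.sub_apply]
  have hQx' := hQx
  set q1 := 1 - d * (x.1 0 * (a 0 * x.1 0) + x.1 1 * (a 1 * x.1 1) + x.1 2 * (a 2 * x.1 2)) with hq1
  have hs0 : 0 < Real.sqrt q1 := Real.sqrt_pos.2 hQx'
  have hs2 : Real.sqrt q1 ^ 2 = q1 := Real.sq_sqrt hQx'.le
  set s := Real.sqrt q1 with hsdef
  rw [← hs2]
  have hsne : s ≠ 0 := ne_of_gt hs0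
  field_simp
  ring
end
end

section
/- The functions C1 = (γ, γ) and C2 = (γ, M) are Casimir functions of the Poisson bracket {·,·}_g: they Poisson-commute with all coordinate functions γ_i and M_i. -/
open scoped BigOperators
noncomputable section

def L1 (i : Fin 3) : St →L[ℝ] ℝ :=
  (ContinuousLinearMap.proj i).comp (ContinuousLinearMap.fst ℝ R3 R3)
def L2 (i : Fin 3) : St →L[ℝ] ℝ :=
  (ContinuousLinearMap.proj i).comp (ContinuousLinearMap.snd ℝ R3 R3)

lemma hL1 (i : Fin 3) (x : St) : HasFDerivAt (fun y : St => y.1 i) (L1 i) x :=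
  (L1 i).hasFDerivAt
lemma hL2 (i : Fin 3) (x : St) : HasFDerivAt (fun y : St => y.2 i) (L2 i) x :=
  (L2 i).hasFDerivAt

lemma hC1 (x : St) : HasFDerivAt (fun y : St => dot3 y.1 y.1)
    (∑ j, (x.1 j • L1 j + x.1 j • L1 j)) x := by
  have h : (fun y : St => dot3 y.1 y.1) = fun y => ∑ j, y.1 j * y.1 j := rfl
  rw [h]
  exact HasFDerivAt.fun_sum fun j _ => (hL1 j x).mul (hL1 j x)

lemma hC2 (x : St) : HasFDerivAt (fun y : St => dot3 y.1 y.2)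
    (∑ j, (x.1 j • L2 j + x.2 j • L1 j)) x := by
  have h : (fun y : St => dot3 y.1 y.2) = fun y => ∑ j, y.1 j * y.2 j := rfl
  rw [h]
  exact HasFDerivAt.fun_sum fun j _ => (hL1 j x).mul (hL2 j x)

@[simp] lemma pdC1l (i : Fin 3) (x : St) :
    pd (.inl i) (fun y : St => dot3 y.1 y.1) x = 2 * x.1 i := by
  show fderiv ℝ (fun y : St => dot3 y.1 y.1) x (Pi.single i 1, 0) = 2 * x.1 i
  rw [(hC1 x).fderiv]
  simp [L1, L2, Pi.single_apply, Finset.sum_add_distrib, Finset.sum_ite_eq', two_mul]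

@[simp] lemma pdC1r (i : Fin 3) (x : St) :
    pd (.inr i) (fun y : St => dot3 y.1 y.1) x = 0 := by
  show fderiv ℝ (fun y : St => dot3 y.1 y.1) x (0, Pi.single i 1) = 0
  rw [(hC1 x).fderiv]
  simp [L1, L2]

@[simp] lemma pdC2l (i : Fin 3) (x : St) :
    pd (.inl i) (fun y : St => dot3 y.1 y.2) x = x.2 i := by
  show fderiv ℝ (fun y : St => dot3 y.1 y.2) x (Pi.single i 1, 0) = x.2 i
  rw [(hC2 x).fderiv]
  simp [L1, L2, Pi.single_apply, Finset.sum_add_distrib, Finset.sum_ite_eq', mul_comm]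

@[simp] lemma pdC2r (i : Fin 3) (x : St) :
    pd (.inr i) (fun y : St => dot3 y.1 y.2) x = x.1 i := by
  show fderiv ℝ (fun y : St => dot3 y.1 y.2) x (0, Pi.single i 1) = x.1 i
  rw [(hC2 x).fderiv]
  simp [L1, L2, Pi.single_apply, Finset.sum_add_distrib, Finset.sum_ite_eq', mul_comm]

@[simp] lemma pd_coord_ll (i j : Fin 3) (x : St) :
    pd (.inl i) (coordFn (.inl j)) x = if j = i then 1 else 0 := by
  show fderiv ℝ (fun y : St => y.1 j) x (Pi.single i 1, 0) = _
  rw [(hL1 j x).fderiv]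
  simp [L1, Pi.single_apply]

@[simp] lemma pd_coord_lr (i j : Fin 3) (x : St) :
    pd (.inl i) (coordFn (.inr j)) x = 0 := by
  show fderiv ℝ (fun y : St => y.2 j) x (Pi.single i 1, 0) = 0
  rw [(hL2 j x).fderiv]
  simp [L2]

@[simp] lemma pd_coord_rl (i j : Fin 3) (x : St) :
    pd (.inr i) (coordFn (.inl j)) x = 0 := by
  show fderiv ℝ (fun y : St => y.1 j) x (0, Pi.single i 1) = 0
  rw [(hL1 j x).fderiv]
  simp [L1]

@[simp] lemma pd_coord_rr (i j : Fin 3) (x : St) :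
    pd (.inr i) (coordFn (.inr j)) x = if j = i then 1 else 0 := by
  show fderiv ℝ (fun y : St => y.2 j) x (0, Pi.single i 1) = _
  rw [(hL2 j x).fderiv]
  simp [L2, Pi.single_apply]

set_option maxHeartbeats 1000000 in
/-- C1 = (γ,γ) and C2 = (γ,M) are Casimir functions of {·,·}_g:
they Poisson commute with every coordinate function γ_i, M_i. -/
theorem casimirs_g_bracket
    (a : R3) (d : ℝ) (hd : 0 < d)
    (x : St) (hx : 0 < 1 - d * dot3 x.1 (Aapp a x.1)) :
    ∀ u : Fin 3 ⊕ Fin 3,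
      pb (piG a d) (fun y => dot3 y.1 y.1) (coordFn u) x = 0 ∧
      pb (piG a d) (fun y => dot3 y.1 y.2) (coordFn u) x = 0 := by
  rintro (j | j) <;> constructor <;>
  · simp only [pb, Fintype.sum_sum_type, Fin.sum_univ_three, pdC1l, pdC1r, pdC2l, pdC2r,
      pd_coord_ll, pd_coord_lr, pd_coord_rl, pd_coord_rr, piG]
    fin_cases j <;>
    · norm_num [eps, Fin.sum_univ_three, Fin.ext_iff] <;> ring
end
end

section
/- The integrals H1 = (M, ω) and H2 = (M, M) are in involution with respect to the Poisson bracket {·,·}_g: {H1, H2}_g = 0. -/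
open scoped BigOperators
noncomputable section

open ContinuousLinearMap in
lemma hasF_bil (b : R3) (p q : St →L[ℝ] R3) (x : St) :
    HasFDerivAt (fun y : St => ∑ i, p y i * (b i * q y i))
      (∑ i : Fin 3, ((p x i) • (b i • ((proj i : R3 →L[ℝ] ℝ).comp q))
        + (b i * q x i) • ((proj i : R3 →L[ℝ] ℝ).comp p))) x := by
  apply HasFDerivAt.fun_sum
  intro i _
  have hp : HasFDerivAt (fun y : St => p y i) ((proj i : R3 →L[ℝ] ℝ).comp p) x :=
    ((proj i : R3 →L[ℝ] ℝ).comp p).hasFDerivAt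
  have hq : HasFDerivAt (fun y : St => q y i) ((proj i : R3 →L[ℝ] ℝ).comp q) x :=
    ((proj i : R3 →L[ℝ] ℝ).comp q).hasFDerivAt
  exact hp.mul (hq.const_mul (b i))


set_option maxHeartbeats 2000000 in
/-- H1 = (M,ω) and H2 = (M,M) are in involution with respect to {·,·}_g. -/
theorem involution_H1_H2_g_bracket
    (a : R3) (d : ℝ) (hd : 0 < d)
    (x : St) (hx : 0 < 1 - d * dot3 x.1 (Aapp a x.1)) :
    pb (piG a d)
      (fun y => dot3 y.2 (Aapp a y.2) +
        d * (dot3 y.1 (Aapp a y.2))^2 / (1 - d * dot3 y.1 (Aapp a y.1)))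
      (fun y => dot3 y.2 y.2) x = 0 := by
  classical
  set fstL := ContinuousLinearMap.fst ℝ R3 R3 with hfstL
  set sndL := ContinuousLinearMap.snd ℝ R3 R3 with hsndL
  have hn : HasFDerivAt (fun y : St => dot3 y.1 (Aapp a y.2))
      (∑ i : Fin 3, ((x.1 i) • (a i • ((ContinuousLinearMap.proj i : R3 →L[ℝ] ℝ).comp sndL))
        + (a i * x.2 i) • ((ContinuousLinearMap.proj i : R3 →L[ℝ] ℝ).comp fstL))) x :=
    hasF_bil a fstL sndL x
  have hs0 : HasFDerivAt (fun y : St => dot3 y.1 (Aapp a y.1))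
      (∑ i : Fin 3, ((x.1 i) • (a i • ((ContinuousLinearMap.proj i : R3 →L[ℝ] ℝ).comp fstL))
        + (a i * x.1 i) • ((ContinuousLinearMap.proj i : R3 →L[ℝ] ℝ).comp fstL))) x :=
    hasF_bil a fstL fstL x
  have hm : HasFDerivAt (fun y : St => dot3 y.2 (Aapp a y.2))
      (∑ i : Fin 3, ((x.2 i) • (a i • ((ContinuousLinearMap.proj i : R3 →L[ℝ] ℝ).comp sndL))
        + (a i * x.2 i) • ((ContinuousLinearMap.proj i : R3 →L[ℝ] ℝ).comp sndL))) x :=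
    hasF_bil a sndL sndL x
  have hsub : HasFDerivAt (fun y : St => 1 - d * dot3 y.1 (Aapp a y.1))
      (-(d • (∑ i : Fin 3, ((x.1 i) • (a i • ((ContinuousLinearMap.proj i : R3 →L[ℝ] ℝ).comp fstL))
        + (a i * x.1 i) • ((ContinuousLinearMap.proj i : R3 →L[ℝ] ℝ).comp fstL))))) x :=
    (hs0.const_mul d).const_sub 1
  have hxne : (1 - d * dot3 x.1 (Aapp a x.1)) ≠ 0 := ne_of_gt hx
  have hinv := HasFDerivAt.comp (𝕜 := ℝ) x (hasFDerivAt_inv hxne) hsub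
  have hF1' := hm.add (((hn.mul hn).const_mul d).mul hinv)
  have hF1 : HasFDerivAt (fun y : St => dot3 y.2 (Aapp a y.2) +
        d * (dot3 y.1 (Aapp a y.2))^2 / (1 - d * dot3 y.1 (Aapp a y.1))) _ x :=
    hF1'.congr_of_eventuallyEq (by
      filter_upwards with y
      simp only [Function.comp, Pi.add_apply, Pi.mul_apply]
      rw [pow_two, div_eq_mul_inv])
  have hF2 : HasFDerivAt (fun y : St => dot3 y.2 y.2)
      (∑ i : Fin 3, ((x.2 i) • ((1:ℝ) • ((ContinuousLinearMap.proj i : R3 →L[ℝ] ℝ).comp sndL))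
        + ((1:ℝ) * x.2 i) • ((ContinuousLinearMap.proj i : R3 →L[ℝ] ℝ).comp sndL))) x := by
    have heq : (fun y : St => dot3 y.2 y.2)
        = (fun y : St => ∑ i, sndL y i * ((fun _ : Fin 3 => (1:ℝ)) i * sndL y i)) := by
      funext y; simp [dot3, hsndL]
    rw [heq]
    exact hasF_bil (fun _ => 1) sndL sndL x
  set n := dot3 x.1 (Aapp a x.2) with hndef
  have hpd1l : ∀ i, pd (.inl i) (fun y : St => dot3 y.2 (Aapp a y.2) +
        d * (dot3 y.1 (Aapp a y.2))^2 / (1 - d * dot3 y.1 (Aapp a y.1))) x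
      = 2*d*n*(a i * x.2 i)/(1 - d * dot3 x.1 (Aapp a x.1))
        + 2*d^2*n*n*(a i * x.1 i)/(1 - d * dot3 x.1 (Aapp a x.1))^2 := by
    intro i
    have hfd := hF1.fderiv
    simp only [pd]
    rw [hfd]
    simp [hfstL, hsndL, Pi.single_apply, Finset.sum_add_distrib, Finset.mul_sum,
      Finset.sum_div, Finset.sum_ite_eq, Finset.sum_ite_eq']
    field_simp
    ring
  have hpd1r : ∀ i, pd (.inr i) (fun y : St => dot3 y.2 (Aapp a y.2) +
        d * (dot3 y.1 (Aapp a y.2))^2 / (1 - d * dot3 y.1 (Aapp a y.1))) x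
      = 2*(a i * x.2 i) + 2*d*n*(a i * x.1 i)/(1 - d * dot3 x.1 (Aapp a x.1)) := by
    intro i
    have hfd := hF1.fderiv
    simp only [pd]
    rw [hfd]
    simp [hfstL, hsndL, Pi.single_apply, Finset.sum_add_distrib, Finset.mul_sum,
      Finset.sum_div, Finset.sum_ite_eq, Finset.sum_ite_eq']
    field_simp
    ring
  have hpd2l : ∀ i, pd (.inl i) (fun y : St => dot3 y.2 y.2) x = 0 := by
    intro i
    have hfd := hF2.fderiv
    simp only [pd]
    rw [hfd]
    simp [hfstL, hsndL, Pi.single_apply, Finset.sum_add_distrib, Finset.mul_sum,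
      Finset.sum_div, Finset.sum_ite_eq, Finset.sum_ite_eq']
  have hpd2r : ∀ i, pd (.inr i) (fun y : St => dot3 y.2 y.2) x = 2 * x.2 i := by
    intro i
    have hfd := hF2.fderiv
    simp only [pd]
    rw [hfd]
    simp [hfstL, hsndL, Pi.single_apply, Finset.sum_add_distrib, Finset.mul_sum,
      Finset.sum_div, Finset.sum_ite_eq, Finset.sum_ite_eq']
    ring
  have hgpos : 0 < gfun a d x.1 := Real.sqrt_pos.2 hx
  have hg2 : gfun a d x.1 ^ 2 = 1 - d * dot3 x.1 (Aapp a x.1) := Real.sq_sqrt hx.le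
  have hgne : gfun a d x.1 ≠ 0 := ne_of_gt hgpos
  rw [pb]
  rw [Fintype.sum_sum_type]
  simp only [Fintype.sum_sum_type, hpd1l, hpd1r, hpd2l, hpd2r, piG]
  rw [← hg2]
  simp only [Fin.sum_univ_three, hndef, dot3, Aapp]
  norm_num [eps]
  field_simp
  ring
end
end

section
/- The canonical Lie–Poisson bivector P on e*(3) and its trivial deformation P_g (the Chaplygin bracket with g = sqrt(1 − d(γ,Aγ))) are compatible: the Schouten bracket [P, P_g] vanishes, i.e. P + P_g again satisfies the Jacobi identity. -/
open scoped BigOperators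
noncomputable section

/-- Structure matrix of the canonical Lie-Poisson bracket on e*(3). -/
def piP (x : St) : (Fin 3 ⊕ Fin 3) → (Fin 3 ⊕ Fin 3) → ℝ
  | .inl _, .inl _ => 0
  | .inl i, .inr j => ∑ k, eps i j k * x.1 k
  | .inr i, .inl j => ∑ k, eps i j k * x.1 k
  | .inr i, .inr j => ∑ k, eps i j k * x.2 k

set_option maxHeartbeats 2000000

namespace Compat

noncomputable def L1 (k : Fin 3) : St →L[ℝ] ℝ :=
  (ContinuousLinearMap.proj k).comp (ContinuousLinearMap.fst ℝ R3 R3)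
noncomputable def L2 (k : Fin 3) : St →L[ℝ] ℝ :=
  (ContinuousLinearMap.proj k).comp (ContinuousLinearMap.snd ℝ R3 R3)
lemma h1 (k : Fin 3) (x : St) : HasFDerivAt (fun y : St => y.1 k) (L1 k) x := (L1 k).hasFDerivAt
lemma h2 (k : Fin 3) (x : St) : HasFDerivAt (fun y : St => y.2 k) (L2 k) x := (L2 k).hasFDerivAt
@[simp] lemma L1_app1 (k m : Fin 3) : L1 k (Pi.single m 1, 0) = if k = m then 1 else 0 := by
  simp [L1, Pi.single_apply]
@[simp] lemma L1_app2 (k m : Fin 3) : L1 k ((0 : R3), Pi.single m 1) = 0 := by simp [L1]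
@[simp] lemma L2_app2 (k m : Fin 3) : L2 k ((0 : R3), Pi.single m 1) = if k = m then 1 else 0 := by
  simp [L2, Pi.single_apply]
@[simp] lemma L2_app1 (k m : Fin 3) : L2 k (Pi.single m 1, (0 : R3)) = 0 := by simp [L2]

variable (a : R3) (d : ℝ) (x : St)

noncomputable def LQ : St →L[ℝ] ℝ :=
  -(d • ∑ i : Fin 3, (x.1 i • (a i • L1 i) + (a i * x.1 i) • L1 i))
noncomputable def LG : St →L[ℝ] ℝ :=
  (1 / (2 * Real.sqrt (1 - d * dot3 x.1 (Aapp a x.1)))) • LQ a d x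
noncomputable def LS : St →L[ℝ] ℝ :=
  ∑ i : Fin 3, (x.2 i • (a i • L1 i) + (a i * x.1 i) • L2 i)

lemma hQx : HasFDerivAt (fun y : St => 1 - d * dot3 y.1 (Aapp a y.1)) (LQ a d x) x := by
  have hs : HasFDerivAt (fun y : St => ∑ i : Fin 3, y.1 i * (a i * y.1 i))
      (∑ i : Fin 3, (x.1 i • (a i • L1 i) + (a i * x.1 i) • L1 i)) x :=
    HasFDerivAt.fun_sum (fun i _ => (h1 i x).mul ((h1 i x).const_mul (a i)))
  have := (hs.const_mul d).const_sub 1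
  simpa [LQ, dot3, Aapp, sub_eq_add_neg, neg_smul] using this

lemma hGx (hx : 0 < 1 - d * dot3 x.1 (Aapp a x.1)) :
    HasFDerivAt (fun y : St => gfun a d y.1) (LG a d x) x :=
  (hQx a d x).sqrt (ne_of_gt hx)

lemma hSx : HasFDerivAt (fun y : St => dot3 y.2 (Aapp a y.1)) (LS a x) x := by
  have hs : HasFDerivAt (fun y : St => ∑ i : Fin 3, y.2 i * (a i * y.1 i))
      (∑ i : Fin 3, (x.2 i • (a i • L1 i) + (a i * x.1 i) • L2 i)) x :=
    HasFDerivAt.fun_sum (fun i _ => (h2 i x).mul ((h1 i x).const_mul (a i)))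
  simpa [LS, dot3, Aapp] using hs

lemma sqrt_ne (hx : 0 < 1 - d * dot3 x.1 (Aapp a x.1)) : gfun a d x.1 ≠ 0 :=
  ne_of_gt (Real.sqrt_pos.mpr hx)

lemma LG_app1 (m : Fin 3) :
    LG a d x (Pi.single m 1, 0) = -(d * a m * x.1 m) / gfun a d x.1 := by
  simp only [LG, LQ, ContinuousLinearMap.smul_apply, ContinuousLinearMap.neg_apply,
    ContinuousLinearMap.sum_apply, ContinuousLinearMap.add_apply, L1_app1, smul_eq_mul, gfun]
  rw [Fin.sum_univ_three]
  rcases eq_or_ne (Real.sqrt (1 - d * dot3 x.1 (Aapp a x.1))) 0 with h | h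
  · rw [h]; fin_cases m <;> simp <;> ring
  · fin_cases m <;> simp <;> field_simp <;> ring
lemma LG_app2 (m : Fin 3) : LG a d x ((0 : R3), Pi.single m 1) = 0 := by
  simp only [LG, LQ, ContinuousLinearMap.smul_apply, ContinuousLinearMap.neg_apply,
    ContinuousLinearMap.sum_apply, ContinuousLinearMap.add_apply, L1_app2, smul_eq_mul]
  simp
lemma LS_app1 (m : Fin 3) : LS a x (Pi.single m 1, 0) = a m * x.2 m := by
  simp only [LS, ContinuousLinearMap.sum_apply, ContinuousLinearMap.add_apply,
    ContinuousLinearMap.smul_apply, L1_app1, L2_app1, smul_eq_mul]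
  rw [Fin.sum_univ_three]
  fin_cases m <;> simp <;> ring
lemma LS_app2 (m : Fin 3) : LS a x ((0 : R3), Pi.single m 1) = a m * x.1 m := by
  simp only [LS, ContinuousLinearMap.sum_apply, ContinuousLinearMap.add_apply,
    ContinuousLinearMap.smul_apply, L1_app2, L2_app2, smul_eq_mul]
  rw [Fin.sum_univ_three]
  fin_cases m <;> simp <;> ring


lemma pd_zeroFn (u : Fin 3 ⊕ Fin 3) : pd u (fun _ : St => (0 : ℝ)) x = 0 := by
  cases u <;> simp [pd]

lemma pdG_lr_l (hx : 0 < 1 - d * dot3 x.1 (Aapp a x.1)) (i j m : Fin 3) :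
    pd (.inl m) (fun y : St => ∑ k : Fin 3, eps i j k * gfun a d y.1 * y.1 k) x =
      (-(d * a m * x.1 m) / gfun a d x.1) * (∑ k : Fin 3, eps i j k * x.1 k) +
        eps i j m * gfun a d x.1 := by
  have hF : HasFDerivAt (fun y : St => ∑ k : Fin 3, eps i j k * gfun a d y.1 * y.1 k)
      (∑ k : Fin 3, ((eps i j k * gfun a d x.1) • L1 k + x.1 k • (eps i j k • LG a d x))) x :=
    HasFDerivAt.fun_sum (fun k _ => ((hGx a d x hx).const_mul (eps i j k)).mul (h1 k x))
  simp only [pd, hF.fderiv, ContinuousLinearMap.sum_apply, ContinuousLinearMap.add_apply,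
    ContinuousLinearMap.smul_apply, smul_eq_mul, L1_app1, LG_app1]
  rw [Fin.sum_univ_three, Fin.sum_univ_three]
  fin_cases m <;> simp <;> ring

lemma pdG_lr_r (hx : 0 < 1 - d * dot3 x.1 (Aapp a x.1)) (i j m : Fin 3) :
    pd (.inr m) (fun y : St => ∑ k : Fin 3, eps i j k * gfun a d y.1 * y.1 k) x = 0 := by
  have hF : HasFDerivAt (fun y : St => ∑ k : Fin 3, eps i j k * gfun a d y.1 * y.1 k)
      (∑ k : Fin 3, ((eps i j k * gfun a d x.1) • L1 k + x.1 k • (eps i j k • LG a d x))) x :=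
    HasFDerivAt.fun_sum (fun k _ => ((hGx a d x hx).const_mul (eps i j k)).mul (h1 k x))
  simp only [pd, hF.fderiv, ContinuousLinearMap.sum_apply, ContinuousLinearMap.add_apply,
    ContinuousLinearMap.smul_apply, smul_eq_mul, L1_app2, LG_app2]
  simp

lemma pdG_rr_l (hx : 0 < 1 - d * dot3 x.1 (Aapp a x.1)) (i j m : Fin 3) :
    pd (.inl m) (fun y : St => ∑ k : Fin 3, eps i j k *
        (gfun a d y.1 * y.2 k - d * dot3 y.2 (Aapp a y.1) * y.1 k * (gfun a d y.1)⁻¹)) x =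
      (-(d * a m * x.1 m) / gfun a d x.1) * (∑ k : Fin 3, eps i j k * x.2 k)
      - (d * (a m * x.2 m) / gfun a d x.1) * (∑ k : Fin 3, eps i j k * x.1 k)
      - eps i j m * (d * dot3 x.2 (Aapp a x.1) / gfun a d x.1)
      - (d * dot3 x.2 (Aapp a x.1) * (d * a m * x.1 m) / gfun a d x.1 ^ 3) *
          (∑ k : Fin 3, eps i j k * x.1 k) := by
  have hInv : HasFDerivAt (fun y : St => (gfun a d y.1)⁻¹)
      ((-(gfun a d x.1 ^ 2)⁻¹) • LG a d x) x :=
    (hasDerivAt_inv (sqrt_ne a d x hx)).comp_hasFDerivAt x (hGx a d x hx)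
  have hF : HasFDerivAt (fun y : St => ∑ k : Fin 3, eps i j k *
        (gfun a d y.1 * y.2 k - d * dot3 y.2 (Aapp a y.1) * y.1 k * (gfun a d y.1)⁻¹))
      (∑ k : Fin 3, eps i j k •
        ((gfun a d x.1 • L2 k + x.2 k • LG a d x) -
          ((d * dot3 x.2 (Aapp a x.1) * x.1 k) • ((-(gfun a d x.1 ^ 2)⁻¹) • LG a d x) +
            (gfun a d x.1)⁻¹ •
              ((d * dot3 x.2 (Aapp a x.1)) • L1 k + x.1 k • (d • LS a x))))) x :=
    HasFDerivAt.fun_sum (fun k _ => (((hGx a d x hx).mul (h2 k x)).sub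
      ((((hSx a x).const_mul d).mul (h1 k x)).mul hInv)).const_mul (eps i j k))
  simp only [pd, hF.fderiv, ContinuousLinearMap.sum_apply, ContinuousLinearMap.add_apply,
    ContinuousLinearMap.sub_apply, ContinuousLinearMap.smul_apply, smul_eq_mul,
    L1_app1, L2_app1, LG_app1, LS_app1]
  rw [Fin.sum_univ_three, Fin.sum_univ_three, Fin.sum_univ_three]
  have hg := sqrt_ne a d x hx
  fin_cases m <;>
    simp only [Fin.zero_eta, Fin.mk_one, Fin.reduceFinMk, Fin.isValue, Fin.reduceEq, if_true, if_false, ite_true, ite_false, mul_one, mul_zero,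
      add_zero, zero_add, one_mul, zero_mul, sub_zero, neg_zero, zero_sub] <;>
    norm_num [Fin.ext_iff] <;> field_simp <;> ring

lemma pdG_rr_r (hx : 0 < 1 - d * dot3 x.1 (Aapp a x.1)) (i j m : Fin 3) :
    pd (.inr m) (fun y : St => ∑ k : Fin 3, eps i j k *
        (gfun a d y.1 * y.2 k - d * dot3 y.2 (Aapp a y.1) * y.1 k * (gfun a d y.1)⁻¹)) x =
      eps i j m * gfun a d x.1
      - (d * (a m * x.1 m) / gfun a d x.1) * (∑ k : Fin 3, eps i j k * x.1 k) := by
  have hInv : HasFDerivAt (fun y : St => (gfun a d y.1)⁻¹)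
      ((-(gfun a d x.1 ^ 2)⁻¹) • LG a d x) x :=
    (hasDerivAt_inv (sqrt_ne a d x hx)).comp_hasFDerivAt x (hGx a d x hx)
  have hF : HasFDerivAt (fun y : St => ∑ k : Fin 3, eps i j k *
        (gfun a d y.1 * y.2 k - d * dot3 y.2 (Aapp a y.1) * y.1 k * (gfun a d y.1)⁻¹))
      (∑ k : Fin 3, eps i j k •
        ((gfun a d x.1 • L2 k + x.2 k • LG a d x) -
          ((d * dot3 x.2 (Aapp a x.1) * x.1 k) • ((-(gfun a d x.1 ^ 2)⁻¹) • LG a d x) +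
            (gfun a d x.1)⁻¹ •
              ((d * dot3 x.2 (Aapp a x.1)) • L1 k + x.1 k • (d • LS a x))))) x :=
    HasFDerivAt.fun_sum (fun k _ => (((hGx a d x hx).mul (h2 k x)).sub
      ((((hSx a x).const_mul d).mul (h1 k x)).mul hInv)).const_mul (eps i j k))
  simp only [pd, hF.fderiv, ContinuousLinearMap.sum_apply, ContinuousLinearMap.add_apply,
    ContinuousLinearMap.sub_apply, ContinuousLinearMap.smul_apply, smul_eq_mul,
    L1_app2, L2_app2, LG_app2, LS_app2]
  rw [Fin.sum_univ_three, Fin.sum_univ_three]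
  have hg := sqrt_ne a d x hx
  fin_cases m <;>
    simp only [Fin.zero_eta, Fin.mk_one, Fin.reduceFinMk, Fin.isValue, Fin.reduceEq, if_true, if_false, ite_true, ite_false, mul_one, mul_zero,
      add_zero, zero_add, one_mul, zero_mul, sub_zero, neg_zero, zero_sub] <;>
    norm_num [Fin.ext_iff] <;> field_simp <;> ring

lemma pdP1_l (i j m : Fin 3) :
    pd (.inl m) (fun y : St => ∑ k : Fin 3, eps i j k * y.1 k) x = eps i j m := by
  have hF : HasFDerivAt (fun y : St => ∑ k : Fin 3, eps i j k * y.1 k)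
      (∑ k : Fin 3, eps i j k • L1 k) x :=
    HasFDerivAt.fun_sum (fun k _ => (h1 k x).const_mul (eps i j k))
  simp only [pd, hF.fderiv, ContinuousLinearMap.sum_apply, ContinuousLinearMap.smul_apply,
    smul_eq_mul, L1_app1]
  rw [Fin.sum_univ_three]
  fin_cases m <;> simp

lemma pdP1_r (i j m : Fin 3) :
    pd (.inr m) (fun y : St => ∑ k : Fin 3, eps i j k * y.1 k) x = 0 := by
  have hF : HasFDerivAt (fun y : St => ∑ k : Fin 3, eps i j k * y.1 k)
      (∑ k : Fin 3, eps i j k • L1 k) x :=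
    HasFDerivAt.fun_sum (fun k _ => (h1 k x).const_mul (eps i j k))
  simp only [pd, hF.fderiv, ContinuousLinearMap.sum_apply, ContinuousLinearMap.smul_apply,
    smul_eq_mul, L1_app2]
  simp

lemma pdP2_l (i j m : Fin 3) :
    pd (.inl m) (fun y : St => ∑ k : Fin 3, eps i j k * y.2 k) x = 0 := by
  have hF : HasFDerivAt (fun y : St => ∑ k : Fin 3, eps i j k * y.2 k)
      (∑ k : Fin 3, eps i j k • L2 k) x :=
    HasFDerivAt.fun_sum (fun k _ => (h2 k x).const_mul (eps i j k))
  simp only [pd, hF.fderiv, ContinuousLinearMap.sum_apply, ContinuousLinearMap.smul_apply,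
    smul_eq_mul, L2_app1]
  simp

lemma pdP2_r (i j m : Fin 3) :
    pd (.inr m) (fun y : St => ∑ k : Fin 3, eps i j k * y.2 k) x = eps i j m := by
  have hF : HasFDerivAt (fun y : St => ∑ k : Fin 3, eps i j k * y.2 k)
      (∑ k : Fin 3, eps i j k • L2 k) x :=
    HasFDerivAt.fun_sum (fun k _ => (h2 k x).const_mul (eps i j k))
  simp only [pd, hF.fderiv, ContinuousLinearMap.sum_apply, ContinuousLinearMap.smul_apply,
    smul_eq_mul, L2_app2]
  rw [Fin.sum_univ_three]
  fin_cases m <;> simp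

@[simp] lemma eps_000 : eps 0 0 0 = 0 := by norm_num [eps]
@[simp] lemma eps_001 : eps 0 0 1 = 0 := by norm_num [eps]
@[simp] lemma eps_002 : eps 0 0 2 = 0 := by norm_num [eps]
@[simp] lemma eps_010 : eps 0 1 0 = 0 := by norm_num [eps]
@[simp] lemma eps_011 : eps 0 1 1 = 0 := by norm_num [eps]
@[simp] lemma eps_012 : eps 0 1 2 = 1 := by norm_num [eps]
@[simp] lemma eps_020 : eps 0 2 0 = 0 := by norm_num [eps]
@[simp] lemma eps_021 : eps 0 2 1 = (-1) := by norm_num [eps]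
@[simp] lemma eps_022 : eps 0 2 2 = 0 := by norm_num [eps]
@[simp] lemma eps_100 : eps 1 0 0 = 0 := by norm_num [eps]
@[simp] lemma eps_101 : eps 1 0 1 = 0 := by norm_num [eps]
@[simp] lemma eps_102 : eps 1 0 2 = (-1) := by norm_num [eps]
@[simp] lemma eps_110 : eps 1 1 0 = 0 := by norm_num [eps]
@[simp] lemma eps_111 : eps 1 1 1 = 0 := by norm_num [eps]
@[simp] lemma eps_112 : eps 1 1 2 = 0 := by norm_num [eps]
@[simp] lemma eps_120 : eps 1 2 0 = 1 := by norm_num [eps]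
@[simp] lemma eps_121 : eps 1 2 1 = 0 := by norm_num [eps]
@[simp] lemma eps_122 : eps 1 2 2 = 0 := by norm_num [eps]
@[simp] lemma eps_200 : eps 2 0 0 = 0 := by norm_num [eps]
@[simp] lemma eps_201 : eps 2 0 1 = 1 := by norm_num [eps]
@[simp] lemma eps_202 : eps 2 0 2 = 0 := by norm_num [eps]
@[simp] lemma eps_210 : eps 2 1 0 = (-1) := by norm_num [eps]
@[simp] lemma eps_211 : eps 2 1 1 = 0 := by norm_num [eps]
@[simp] lemma eps_212 : eps 2 1 2 = 0 := by norm_num [eps]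
@[simp] lemma eps_220 : eps 2 2 0 = 0 := by norm_num [eps]
@[simp] lemma eps_221 : eps 2 2 1 = 0 := by norm_num [eps]
@[simp] lemma eps_222 : eps 2 2 2 = 0 := by norm_num [eps]

noncomputable def DG (a : R3) (d : ℝ) (x : St) :
    (Fin 3 ⊕ Fin 3) → (Fin 3 ⊕ Fin 3) → (Fin 3 ⊕ Fin 3) → ℝ
  | _, .inl _, .inl _ => 0
  | .inl m, .inl i, .inr j =>
      (-(d * a m * x.1 m) / gfun a d x.1) * (∑ k : Fin 3, eps i j k * x.1 k) +
        eps i j m * gfun a d x.1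
  | .inr _, .inl _, .inr _ => 0
  | .inl m, .inr i, .inl j =>
      (-(d * a m * x.1 m) / gfun a d x.1) * (∑ k : Fin 3, eps i j k * x.1 k) +
        eps i j m * gfun a d x.1
  | .inr _, .inr _, .inl _ => 0
  | .inl m, .inr i, .inr j =>
      (-(d * a m * x.1 m) / gfun a d x.1) * (∑ k : Fin 3, eps i j k * x.2 k)
      - (d * (a m * x.2 m) / gfun a d x.1) * (∑ k : Fin 3, eps i j k * x.1 k)
      - eps i j m * (d * dot3 x.2 (Aapp a x.1) / gfun a d x.1)
      - (d * dot3 x.2 (Aapp a x.1) * (d * a m * x.1 m) / gfun a d x.1 ^ 3) *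
          (∑ k : Fin 3, eps i j k * x.1 k)
  | .inr m, .inr i, .inr j =>
      eps i j m * gfun a d x.1
      - (d * (a m * x.1 m) / gfun a d x.1) * (∑ k : Fin 3, eps i j k * x.1 k)

def DP (x : St) : (Fin 3 ⊕ Fin 3) → (Fin 3 ⊕ Fin 3) → (Fin 3 ⊕ Fin 3) → ℝ
  | _, .inl _, .inl _ => 0
  | .inl m, .inl i, .inr j => eps i j m
  | .inr _, .inl _, .inr _ => 0
  | .inl m, .inr i, .inl j => eps i j m
  | .inr _, .inr _, .inl _ => 0
  | .inl _, .inr _, .inr _ => 0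
  | .inr m, .inr i, .inr j => eps i j m

lemma pd_piG (hx : 0 < 1 - d * dot3 x.1 (Aapp a x.1)) (s v w : Fin 3 ⊕ Fin 3) :
    pd s (fun y => piG a d y v w) x = DG a d x s v w := by
  have hdiv : ∀ (i j : Fin 3), (fun y => piG a d y (.inr i) (.inr j)) =
      (fun y : St => ∑ k : Fin 3, eps i j k *
        (gfun a d y.1 * y.2 k - d * dot3 y.2 (Aapp a y.1) * y.1 k * (gfun a d y.1)⁻¹)) := by
    intro i j; funext y; simp [piG, div_eq_mul_inv]
  rcases v with i | i <;> rcases w with j | j <;> rcases s with m | m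
  · exact pd_zeroFn x _
  · exact pd_zeroFn x _
  · exact pdG_lr_l a d x hx i j m
  · exact pdG_lr_r a d x hx i j m
  · exact pdG_lr_l a d x hx i j m
  · exact pdG_lr_r a d x hx i j m
  · rw [show (fun y => piG a d y (.inr i) (.inr j)) = _ from hdiv i j]
    exact pdG_rr_l a d x hx i j m
  · rw [show (fun y => piG a d y (.inr i) (.inr j)) = _ from hdiv i j]
    exact pdG_rr_r a d x hx i j m

lemma pd_piP (s v w : Fin 3 ⊕ Fin 3) :
    pd s (fun y => piP y v w) x = DP x s v w := by
  rcases v with i | i <;> rcases w with j | j <;> rcases s with m | m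
  · exact pd_zeroFn x _
  · exact pd_zeroFn x _
  · exact pdP1_l x i j m
  · exact pdP1_r x i j m
  · exact pdP1_l x i j m
  · exact pdP1_r x i j m
  · exact pdP2_l x i j m
  · exact pdP2_r x i j m

lemma pd_coordFn (u v : Fin 3 ⊕ Fin 3) :
    pd u (coordFn v) x = if u = v then 1 else 0 := by
  rcases u with m | m <;> rcases v with i | i
  · have hF : HasFDerivAt (coordFn (.inl i)) (L1 i) x := (L1 i).hasFDerivAt
    simp only [pd, hF.fderiv, L1_app1]
    rcases eq_or_ne m i with h | h
    · simp [h]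
    · simp [h, Ne.symm h]
  · have hF : HasFDerivAt (coordFn (.inr i)) (L2 i) x := (L2 i).hasFDerivAt
    simp only [pd, hF.fderiv, L2_app1]
    simp
  · have hF : HasFDerivAt (coordFn (.inl i)) (L1 i) x := (L1 i).hasFDerivAt
    simp only [pd, hF.fderiv, L1_app2]
    simp
  · have hF : HasFDerivAt (coordFn (.inr i)) (L2 i) x := (L2 i).hasFDerivAt
    simp only [pd, hF.fderiv, L2_app2]
    rcases eq_or_ne m i with h | h
    · simp [h]
    · simp [h, Ne.symm h]

lemma pb_cc (π : St → (Fin 3 ⊕ Fin 3) → (Fin 3 ⊕ Fin 3) → ℝ) (v w : Fin 3 ⊕ Fin 3) :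
    pb π (coordFn v) (coordFn w) = fun y => π y v w := by
  funext y
  unfold pb
  rw [Finset.sum_eq_single v]
  · rw [Finset.sum_eq_single w]
    · simp [pd_coordFn]
    · intro b _ hb; simp [pd_coordFn, hb]
    · simp
  · intro b _ hb; simp [pd_coordFn, hb]
  · simp

lemma pb_cl (π : St → (Fin 3 ⊕ Fin 3) → (Fin 3 ⊕ Fin 3) → ℝ) (u : Fin 3 ⊕ Fin 3)
    (H : St → ℝ) : pb π (coordFn u) H x = ∑ s, π x u s * pd s H x := by
  unfold pb
  rw [Finset.sum_eq_single u]
  · simp [pd_coordFn]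
  · intro b _ hb; simp [pd_coordFn, hb]
  · simp

end Compat

set_option maxHeartbeats 4000000 in
/-- the canonical Lie-Poisson bivector P on e*(3) and its trivial
deformation P_g are compatible: the mixed Jacobi identity holds on coordinate
functions, i.e. [P, P_g] = 0 (so P + P_g is again Poisson). -/
theorem compatibility_P_Pg
    (a : R3) (d : ℝ) (hd : 0 < d)
    (x : St) (hx : 0 < 1 - d * dot3 x.1 (Aapp a x.1)) :
    ∀ u v w : Fin 3 ⊕ Fin 3,
      (pb piP (coordFn u) (pb (piG a d) (coordFn v) (coordFn w)) x +
       pb piP (coordFn v) (pb (piG a d) (coordFn w) (coordFn u)) x +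
       pb piP (coordFn w) (pb (piG a d) (coordFn u) (coordFn v)) x) +
      (pb (piG a d) (coordFn u) (pb piP (coordFn v) (coordFn w)) x +
       pb (piG a d) (coordFn v) (pb piP (coordFn w) (coordFn u)) x +
       pb (piG a d) (coordFn w) (pb piP (coordFn u) (coordFn v)) x) = 0 := by
  intro u v w
  have hg := Compat.sqrt_ne a d x hx
  simp only [Compat.pb_cc]
  simp only [Compat.pb_cl]
  simp only [Compat.pd_piG a d x hx, Compat.pd_piP]
  rcases u with i | i <;> rcases v with j | j <;> rcases w with k | k <;>
    fin_cases i <;> fin_cases j <;> fin_cases k <;>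
    (simp only [Fintype.sum_sum_type, Compat.DG, Compat.DP, piP, piG, Fin.sum_univ_three,
      dot3, Aapp, Fin.zero_eta, Fin.mk_one, Fin.reduceFinMk, Fin.isValue,
      Compat.eps_000, Compat.eps_001, Compat.eps_002, Compat.eps_010, Compat.eps_011, Compat.eps_012, Compat.eps_020, Compat.eps_021, Compat.eps_022, Compat.eps_100, Compat.eps_101, Compat.eps_102, Compat.eps_110, Compat.eps_111, Compat.eps_112, Compat.eps_120, Compat.eps_121, Compat.eps_122, Compat.eps_200, Compat.eps_201, Compat.eps_202, Compat.eps_210, Compat.eps_211, Compat.eps_212, Compat.eps_220, Compat.eps_221, Compat.eps_222,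
      mul_zero, zero_mul, mul_one, one_mul, add_zero, zero_add, mul_neg, neg_mul, sub_zero,
      zero_sub, neg_zero, neg_neg, zero_div];
     try (first | ring | (field_simp; ring)))
end
end
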